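/- Let G be a prime P5-free graph which is not 2P2-free. If D is an efficient dominating set of G with |D| = 2, say D = {d_1, d_2}, then N(d_1) and N(d_2) are cliques, V = N[d_1] ∪ N[d_2] with N[d_1] ∩ N[d_2] = ∅, and every vertex of N(d_1) has a neighbor in N(d_2) and vice versa. -/

import Mathlib

open SimpleGraph

/-- `D` is an efficient dominating set: every vertex is dominated by exactly one vertex of `D`
(a vertex dominates itself and its neighbors). -/
def SimpleGraph.IsEDS {V : Type*} (G : SimpleGraph V) (D : Set V) : Prop :=
  ∀ v : V, ∃! d, d ∈ D ∧ (d = v ∨ G.Adj d v)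

/-- The closed neighborhood of a vertex. -/
def SimpleGraph.closedNbhd {V : Type*} (G : SimpleGraph V) (v : V) : Set V :=
  insert v (G.neighborSet v)

/-- A homogeneous set: at least two vertices, not all of them, and every outside vertex is
adjacent to all or to none of them. -/
def SimpleGraph.IsHomogeneousSet {V : Type*} (G : SimpleGraph V) (H : Set V) : Prop :=
  2 ≤ H.ncard ∧ H ≠ Set.univ ∧
    ∀ v ∉ H, (∀ h ∈ H, G.Adj v h) ∨ (∀ h ∈ H, ¬ G.Adj v h)

/-- A prime graph: at least two vertices and no homogeneous set. -/
def SimpleGraph.IsPrime {V : Type*} [Fintype V] (G : SimpleGraph V) : Prop :=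
  2 ≤ Fintype.card V ∧ ∀ H : Set V, ¬ G.IsHomogeneousSet H

/-- `G` is `P₅`-free: no induced subgraph isomorphic to the path on five vertices. -/
def SimpleGraph.P5Free {V : Type*} (G : SimpleGraph V) : Prop :=
  ¬ Nonempty (SimpleGraph.pathGraph 5 ↪g G)

/-- The graph `2P₂`: the disjoint union of two edges. -/
def twoP2 : SimpleGraph (Fin 4) :=
  SimpleGraph.fromRel (fun a b => (a = 0 ∧ b = 1) ∨ (a = 2 ∧ b = 3))

/-- `G` is `2P₂`-free: no induced subgraph isomorphic to `2P₂`. -/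
def SimpleGraph.TwoP2Free {V : Type*} (G : SimpleGraph V) : Prop :=
  ¬ Nonempty (twoP2 ↪g G)

/-- A thin spider: a split graph with a clique side `C` and independent side `I`,
with a perfect matching between `C` and `I`. -/
def SimpleGraph.IsThinSpider {V : Type*} (G : SimpleGraph V) : Prop :=
  ∃ C I : Set V, Disjoint C I ∧ C ∪ I = Set.univ ∧ G.IsClique C ∧
    (∀ a ∈ I, ∀ b ∈ I, a ≠ b → ¬ G.Adj a b) ∧
    (∀ c ∈ C, ∃! i, i ∈ I ∧ G.Adj c i) ∧
    (∀ i ∈ I, ∃! c, c ∈ C ∧ G.Adj i c)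

/-- Helper: build a `P₅` embedding from five suitable vertices. -/
lemma p5_embed_aux {V : Type*} (G : SimpleGraph V) (a b c d e : V)
    (hab : G.Adj a b) (hbc : G.Adj b c) (hcd : G.Adj c d) (hde : G.Adj d e)
    (hac : ¬G.Adj a c) (had : ¬G.Adj a d) (hae : ¬G.Adj a e)
    (hbd : ¬G.Adj b d) (hbe : ¬G.Adj b e) (hce : ¬G.Adj c e) :
    Nonempty (SimpleGraph.pathGraph 5 ↪g G) := by
  have nab : a ≠ b := hab.ne
  have nac : a ≠ c := fun h => had (h ▸ hcd)
  have nad : a ≠ d := fun h => hbd (h ▸ hab).symm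
  have nae : a ≠ e := fun h => hbe (h ▸ hab).symm
  have nbc : b ≠ c := hbc.ne
  have nbd : b ≠ d := fun h => had (h ▸ hab)
  have nbe : b ≠ e := fun h => hce (h ▸ hbc).symm
  have ncd : c ≠ d := hcd.ne
  have nce : c ≠ e := fun h => hbe (h ▸ hbc)
  have nde : d ≠ e := hde.ne
  have sba : G.Adj b a := hab.symm
  have scb : G.Adj c b := hbc.symm
  have sdc : G.Adj d c := hcd.symm
  have sed : G.Adj e d := hde.symm
  have sca : ¬G.Adj c a := fun h => hac h.symm
  have sda : ¬G.Adj d a := fun h => had h.symm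
  have sea : ¬G.Adj e a := fun h => hae h.symm
  have sdb : ¬G.Adj d b := fun h => hbd h.symm
  have seb : ¬G.Adj e b := fun h => hbe h.symm
  have sec : ¬G.Adj e c := fun h => hce h.symm
  refine ⟨⟨⟨![a,b,c,d,e], ?_⟩, ?_⟩⟩
  · intro i j hij
    fin_cases i <;> fin_cases j <;> simp_all
  · intro i j
    fin_cases i <;> fin_cases j <;> simp_all [pathGraph_adj] <;> assumption

/-- Key: a neighbor of `d₂` is adjacent to both or neither of a nonadjacent pair in `N(d₁)`. -/
lemma key_lemma_aux {V : Type*} (G : SimpleGraph V) (hP5 : G.P5Free)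
    (d₁ d₂ : V)
    (huniq : ∀ v : V, (v = d₁ ∨ G.Adj d₁ v) → (v = d₂ ∨ G.Adj d₂ v) → False)
    (z a b : V) (hz : G.Adj d₂ z) (ha : G.Adj d₁ a) (hb : G.Adj d₁ b)
    (hnab : ¬G.Adj a b) (hza : G.Adj z a) : G.Adj z b := by
  by_contra hzb
  have hd12 : ¬G.Adj d₂ d₁ := fun h => huniq d₁ (Or.inl rfl) (Or.inr h)
  exact hP5 (p5_embed_aux G d₂ z a d₁ b hz hza ha.symm hb
    (fun h => huniq a (Or.inr ha) (Or.inr h)) hd12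
    (fun h => huniq b (Or.inr hb) (Or.inr h))
    (fun h => huniq z (Or.inr h.symm) (Or.inr hz)) hzb hnab)

/-- In a prime `P₅`-free graph with EDS `{d₁, d₂}`, the neighborhood of `d₁` is a clique. -/
lemma clique_aux {V : Type*} [Fintype V] (G : SimpleGraph V) (hprime : G.IsPrime)
    (hP5 : G.P5Free) (d₁ d₂ : V)
    (hdom : ∀ v : V, (v = d₁ ∨ G.Adj d₁ v) ∨ (v = d₂ ∨ G.Adj d₂ v))
    (huniq : ∀ v : V, (v = d₁ ∨ G.Adj d₁ v) → (v = d₂ ∨ G.Adj d₂ v) → False) :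
    G.IsClique (G.neighborSet d₁) := by
  intro x hx y hy hxy
  rw [mem_neighborSet] at hx hy
  by_contra hnadj
  set R : V → V → Prop := fun a b => G.Adj d₁ a ∧ G.Adj d₁ b ∧ ¬G.Adj a b with hR
  set A : Set V := {v | G.Adj d₁ v ∧ Relation.ReflTransGen R x v} with hA
  have hxA : x ∈ A := ⟨hx, Relation.ReflTransGen.refl⟩
  have hyA : y ∈ A := ⟨hy, Relation.ReflTransGen.single ⟨hx, hy, hnadj⟩⟩
  refine hprime.2 A ⟨?_, ?_, ?_⟩
  · have hsub : ({x, y} : Set V) ⊆ A := by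
      rintro v (rfl | rfl) <;> assumption
    calc 2 = ({x, y} : Set V).ncard := (Set.ncard_pair hxy).symm
    _ ≤ A.ncard := Set.ncard_le_ncard hsub A.toFinite
  · intro h
    have : d₁ ∈ A := h ▸ Set.mem_univ d₁
    exact G.irrefl this.1
  · intro v hv
    rcases hdom v with (rfl | hv1) | (rfl | hv2)
    · exact Or.inl fun h hh => hh.1
    · left
      intro a ha
      by_contra hva
      rcases eq_or_ne v a with rfl | hvna
      · exact hv ha
      · exact hv ⟨hv1, ha.2.tail ⟨ha.1, hv1, fun h => hva h.symm⟩⟩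
    · exact Or.inr fun h hh adj => huniq h (Or.inr hh.1) (Or.inr adj)
    · have hiff : ∀ a, Relation.ReflTransGen R x a → (G.Adj v a ↔ G.Adj v x) := by
        intro a h
        induction h with
        | refl => exact Iff.rfl
        | tail _ hstep ih =>
          exact Iff.trans
            ⟨fun hvc => key_lemma_aux G hP5 d₁ d₂ huniq v _ _ hv2 hstep.2.1 hstep.1
                (fun hcb => hstep.2.2 hcb.symm) hvc,
             fun hvb => key_lemma_aux G hP5 d₁ d₂ huniq v _ _ hv2 hstep.1 hstep.2.1
                hstep.2.2 hvb⟩ ih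
      by_cases hvx : G.Adj v x
      · exact Or.inl fun a ha => (hiff a ha.2).mpr hvx
      · exact Or.inr fun a ha h => hvx ((hiff a ha.2).mp h)

/-- Every vertex of `N(d₁)` has a neighbor in `N(d₂)`. -/
lemma nbr_aux {V : Type*} [Fintype V] (G : SimpleGraph V) (hprime : G.IsPrime)
    (hcard : 3 ≤ Fintype.card V) (d₁ d₂ : V)
    (hdom : ∀ v : V, (v = d₁ ∨ G.Adj d₁ v) ∨ (v = d₂ ∨ G.Adj d₂ v))
    (huniq : ∀ v : V, (v = d₁ ∨ G.Adj d₁ v) → (v = d₂ ∨ G.Adj d₂ v) → False)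
    (hclique : G.IsClique (G.neighborSet d₁))
    (x : V) (hx : G.Adj d₁ x) : ∃ y, G.Adj d₂ y ∧ G.Adj x y := by
  by_contra hno
  push_neg at hno
  refine hprime.2 {x, d₁} ⟨?_, ?_, ?_⟩
  · rw [Set.ncard_pair hx.ne']
  · intro h
    have : Fintype.card V ≤ 2 := by
      have := Set.ncard_univ V ▸ h ▸ Set.ncard_insert_le x {d₁}
      simpa [Nat.card_eq_fintype_card] using this
    omega
  · intro v hv
    simp only [Set.mem_insert_iff, Set.mem_singleton_iff, not_or] at hv
    rcases hdom v with (rfl | hv1) | (rfl | hv2)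
    · exact absurd rfl hv.2
    · left
      rintro h (rfl | rfl)
      · exact hclique (G.mem_neighborSet d₁ v |>.mpr hv1) (G.mem_neighborSet d₁ h |>.mpr hx) hv.1
      · exact hv1.symm
    · right
      rintro h (rfl | rfl)
      · exact fun adj => huniq _ (Or.inr hx) (Or.inr adj)
      · exact fun adj => huniq _ (Or.inl rfl) (Or.inr adj)
    · right
      rintro h (rfl | rfl)
      · exact fun adj => hno v hv2 adj.symm
      · exact fun adj => huniq v (Or.inr adj.symm) (Or.inr hv2)

theorem stmt_10 {V : Type*} [Fintype V] (G : SimpleGraph V) (hprime : G.IsPrime)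
    (hP5 : G.P5Free) (h2P2 : ¬ G.TwoP2Free)
    (d₁ d₂ : V) (hne : d₁ ≠ d₂) (hD : G.IsEDS {d₁, d₂}) :
    G.IsClique (G.neighborSet d₁) ∧ G.IsClique (G.neighborSet d₂) ∧
      G.closedNbhd d₁ ∪ G.closedNbhd d₂ = Set.univ ∧
      Disjoint (G.closedNbhd d₁) (G.closedNbhd d₂) ∧
      (∀ x ∈ G.neighborSet d₁, ∃ y ∈ G.neighborSet d₂, G.Adj x y) ∧
      (∀ y ∈ G.neighborSet d₂, ∃ x ∈ G.neighborSet d₁, G.Adj y x) := by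
  classical
  have hdom : ∀ v : V, (v = d₁ ∨ G.Adj d₁ v) ∨ (v = d₂ ∨ G.Adj d₂ v) := by
    intro v
    obtain ⟨d, ⟨hd, hdv⟩, -⟩ := hD v
    simp only [Set.mem_insert_iff, Set.mem_singleton_iff] at hd
    rcases hd with rfl | rfl
    · exact Or.inl (hdv.imp Eq.symm id)
    · exact Or.inr (hdv.imp Eq.symm id)
  have huniq : ∀ v : V, (v = d₁ ∨ G.Adj d₁ v) → (v = d₂ ∨ G.Adj d₂ v) → False := by
    intro v h1 h2
    obtain ⟨d, -, hu⟩ := hD v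
    have e1 := hu d₁ ⟨Set.mem_insert _ _, h1.imp Eq.symm id⟩
    have e2 := hu d₂ ⟨Set.mem_insert_of_mem _ rfl, h2.imp Eq.symm id⟩
    exact hne (e1.trans e2.symm)
  have hdom' : ∀ v : V, (v = d₂ ∨ G.Adj d₂ v) ∨ (v = d₁ ∨ G.Adj d₁ v) :=
    fun v => (hdom v).symm
  have huniq' : ∀ v : V, (v = d₂ ∨ G.Adj d₂ v) → (v = d₁ ∨ G.Adj d₁ v) → False :=
    fun v h2 h1 => huniq v h1 h2
  have hcard : 3 ≤ Fintype.card V := by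
    rw [SimpleGraph.TwoP2Free, not_not] at h2P2
    obtain ⟨f⟩ := h2P2
    have := Fintype.card_le_of_injective _ f.injective
    simpa using le_trans (by norm_num) this
  have hc1 := clique_aux G hprime hP5 d₁ d₂ hdom huniq
  have hc2 := clique_aux G hprime hP5 d₂ d₁ hdom' huniq'
  have hmem : ∀ d v : V, v ∈ G.closedNbhd d ↔ v = d ∨ G.Adj d v := by
    intro d v; simp [SimpleGraph.closedNbhd]
  refine ⟨hc1, hc2, ?_, ?_, ?_, ?_⟩
  · ext v
    simp only [Set.mem_union, hmem, Set.mem_univ, iff_true]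
    exact hdom v
  · rw [Set.disjoint_left]
    intro v hv1 hv2
    exact huniq v ((hmem d₁ v).mp hv1) ((hmem d₂ v).mp hv2)
  · intro x hx
    obtain ⟨y, hy, hxy⟩ := nbr_aux G hprime hcard d₁ d₂ hdom huniq hc1 x
      ((G.mem_neighborSet d₁ x).mp hx)
    exact ⟨y, (G.mem_neighborSet d₂ y).mpr hy, hxy⟩
  · intro y hy
    obtain ⟨x, hx, hyx⟩ := nbr_aux G hprime hcard d₂ d₁ hdom' huniq' hc2 y
      ((G.mem_neighborSet d₂ y).mp hy)
    exact ⟨x, (G.mem_neighborSet d₁ x).mpr hx, hyx⟩
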